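/- Let q be an odd prime power, F_q the finite field with q elements. Let a, b, c, A, B, C, D ∈ F_q with c ≠ 0 and A ≠ 0, and define g(x) = x³ + a x² + b x + c, h(x) = (A−1) x³ + B x² + C x + D, f(x,t) = x³ t² + 2 g(x) t − h(x), and D_T(x) = g(x)² + x³ h(x). Suppose D_T(x) = A·∏_{i=1}^{6} (x − ρ_i) where ρ_1, …, ρ_6 are six distinct elements of F_q, each of which is a nonzero square in F_q. For each t ∈ F_q let N_t = #{(x, y) ∈ F_q × F_q : y² = f(x, t)}. Then ∑_{t ∈ F_q} (q − N_t) = −6q; equivalently, the average over t ∈ F_q of the quantities a_t = q − N_t equals −6. -/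

import Mathlib

open Finset

section aux
variable {F : Type*} [Field F] [Fintype F] [DecidableEq F]

lemma sum_quadChar_sq_add (hF : ringChar F ≠ 2) (α γ : F) (hα : α ≠ 0) :
    ∑ t : F, (quadraticChar F (α * t ^ 2 + γ) : ℤ) =
      if γ = 0 then ((Fintype.card F : ℤ) - 1) * quadraticChar F α
      else - quadraticChar F α := by
  have hcount : ∀ u : F, ((univ.filter fun t : F => t ^ 2 = u).card : ℤ)
      = quadraticChar F u + 1 := by
    intro u
    have := quadraticChar_card_sqrts hF u
    rw [← this]; norm_cast; rw [Set.toFinset_setOf]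
  -- group by u = t^2
  have h1 : ∑ t : F, (quadraticChar F (α * t ^ 2 + γ) : ℤ)
      = ∑ u : F, ((quadraticChar F u : ℤ) + 1) * quadraticChar F (α * u + γ) := by
    rw [← Finset.sum_fiberwise univ (fun t : F => t ^ 2)
      (fun t : F => (quadraticChar F (α * t ^ 2 + γ) : ℤ))]
    refine Finset.sum_congr rfl fun u _ => ?_
    calc ∑ t ∈ univ.filter (fun t : F => t ^ 2 = u),
            (quadraticChar F (α * t ^ 2 + γ) : ℤ)
        = ∑ _t ∈ univ.filter (fun t : F => t ^ 2 = u),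
            (quadraticChar F (α * u + γ) : ℤ) :=
          Finset.sum_congr rfl fun t ht => by rw [(Finset.mem_filter.mp ht).2]
      _ = _ := by rw [Finset.sum_const, nsmul_eq_mul, hcount u]
  -- the affine sum vanishes
  have haffine : ∀ β δ : F, β ≠ 0 → ∑ u : F, (quadraticChar F (β * u + δ) : ℤ) = 0 := by
    intro β δ hβ
    have hbij : Function.Bijective (fun u : F => β * u + δ) := by
      constructor
      · intro u v huv
        simpa [hβ] using huv
      · intro v
        exact ⟨(v - δ) / β, by field_simp; ring⟩
    rw [Fintype.sum_bijective _ hbij _ (fun v => (quadraticChar F v : ℤ)) (fun u => rfl)]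
    exact_mod_cast congrArg (Int.cast) (quadraticChar_sum_zero hF)
  rw [h1]
  have h2 : ∑ u : F, ((quadraticChar F u : ℤ) + 1) * quadraticChar F (α * u + γ)
      = ∑ u : F, (quadraticChar F u : ℤ) * quadraticChar F (α * u + γ) := by
    simp only [add_mul, one_mul, Finset.sum_add_distrib, haffine α γ hα, add_zero]
  rw [h2]
  -- now restrict to u ≠ 0 and rewrite the summand
  have h3 : ∑ u : F, (quadraticChar F u : ℤ) * quadraticChar F (α * u + γ)
      = ∑ u ∈ univ.erase (0 : F), (quadraticChar F (α + γ * u⁻¹) : ℤ) := by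
    rw [← Finset.sum_erase_add univ _ (Finset.mem_univ (0 : F))]
    simp only [MulChar.map_zero, Int.cast_zero, zero_mul, add_zero]
    refine Finset.sum_congr rfl fun u hu => ?_
    have hu0 : u ≠ 0 := Finset.ne_of_mem_erase hu
    have : u * (α * u + γ) = u ^ 2 * (α + γ * u⁻¹) := by field_simp
    rw [← map_mul, this, map_mul, quadraticChar_sq_one' hu0]
    ring
  rw [h3]
  by_cases hγ : γ = 0
  · subst hγ
    simp only [if_pos rfl]
    rw [Finset.sum_congr rfl (fun u _ => by rw [zero_mul, add_zero]), Finset.sum_const,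
      Finset.card_erase_of_mem (Finset.mem_univ 0), Finset.card_univ, nsmul_eq_mul]
    have h1le : 1 ≤ Fintype.card F := Fintype.card_pos
    push_cast [Nat.cast_sub h1le]
    ring
  · rw [if_neg hγ]
    -- sum over all u of χ(α + γ u⁻¹) is 0; the u = 0 term is χ α
    have h4 : ∑ u : F, (quadraticChar F (α + γ * u⁻¹) : ℤ) = 0 := by
      have hbij : Function.Bijective (fun u : F => u⁻¹) :=
        (Equiv.inv F).bijective
      rw [Fintype.sum_bijective _ hbij _
        (fun w => (quadraticChar F (α + γ * w) : ℤ)) (fun u => rfl)]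
      have := haffine γ α hγ
      simpa [add_comm] using this
    have := Finset.sum_erase_add univ
      (fun u : F => (quadraticChar F (α + γ * u⁻¹) : ℤ)) (Finset.mem_univ 0)
    rw [h4] at this
    simp only [inv_zero, mul_zero, add_zero] at this
    linarith [this]

lemma sum_quadChar_quadratic (hF : ringChar F ≠ 2) (α β γ : F) (hα : α ≠ 0) :
    ∑ t : F, (quadraticChar F (α * t ^ 2 + β * t + γ) : ℤ) =
      if β ^ 2 - 4 * α * γ = 0 then ((Fintype.card F : ℤ) - 1) * quadraticChar F α
      else - quadraticChar F α := by
  have h2 : (2 : F) ≠ 0 := Ring.two_ne_zero hF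
  have h4 : (4 : F) ≠ 0 := by
    have : (4 : F) = 2 * 2 := by norm_num
    rw [this]; exact mul_ne_zero h2 h2
  set δ := β / (2 * α) with hδ
  set γ' := γ - β ^ 2 / (4 * α) with hγ'
  have hkey : ∀ t : F, α * t ^ 2 + β * t + γ = α * (t + δ) ^ 2 + γ' := by
    intro t; rw [hδ, hγ']; field_simp; ring
  have hre : ∑ t : F, (quadraticChar F (α * t ^ 2 + β * t + γ) : ℤ)
      = ∑ t : F, (quadraticChar F (α * t ^ 2 + γ') : ℤ) := by
    rw [Finset.sum_congr rfl (fun t _ => by rw [hkey t])]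
    exact Fintype.sum_bijective (fun t : F => t + δ) (Equiv.addRight δ).bijective _ _
      (fun t => rfl)
  rw [hre, sum_quadChar_sq_add hF α γ' hα]
  have hcond : γ' = 0 ↔ β ^ 2 - 4 * α * γ = 0 := by
    rw [hγ', sub_eq_zero, eq_div_iff (mul_ne_zero h4 hα)]
    constructor
    · intro h; linear_combination -h
    · intro h; linear_combination -h
  by_cases hcase : γ' = 0
  · rw [if_pos hcase, if_pos (hcond.mp hcase)]
  · rw [if_neg hcase, if_neg (fun h => hcase (hcond.mpr h))]
end aux




/-- **The average trace of Frobenius of the rank-6 family is `-6`.**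
Let `q` be an odd prime power and `F` the finite field with `q` elements.
Given `a b c A B C D : F` with `c ≠ 0` and `A ≠ 0`, set
`g x = x³ + a x² + b x + c`, `h x = (A - 1) x³ + B x² + C x + D`,
`f x t = x³ t² + 2 g(x) t − h(x)` and `D_T x = (g x)² + x³ * h x`.  If
`D_T x = A * ∏ i, (x - ρ i)` for six distinct `ρ 1, …, ρ 6 ∈ F`, each a nonzero
square in `F`, and `N t` denotes the number of points `(x, y) ∈ F × F` with
`y² = f x t`, then `∑ t, (q - N t) = -6 q`; i.e., the average over `t ∈ F` of
the quantities `a_t = q - N t` equals `-6`. -/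
theorem average_trace_of_frobenius_rank_six_family (q : ℕ) (hq : Odd q)
    (F : Type*) [Field F] [Fintype F] [DecidableEq F] (hcard : Fintype.card F = q)
    (a b c A B C D : F) (hc : c ≠ 0) (hA : A ≠ 0)
    (g h : F → F) (f : F → F → F)
    (hg : ∀ x, g x = x ^ 3 + a * x ^ 2 + b * x + c)
    (hh : ∀ x, h x = (A - 1) * x ^ 3 + B * x ^ 2 + C * x + D)
    (hf : ∀ x t, f x t = x ^ 3 * t ^ 2 + 2 * g x * t - h x)
    (ρ : Fin 6 → F) (hinj : Function.Injective ρ)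
    (hρ : ∀ i, ρ i ≠ 0 ∧ IsSquare (ρ i))
    (hDT : ∀ x, (g x) ^ 2 + x ^ 3 * h x = A * ∏ i, (x - ρ i))
    (N : F → ℕ)
    (hN : ∀ t, N t = Nat.card {p : F × F // p.2 ^ 2 = f p.1 t}) :
    ∑ t : F, ((q : ℤ) - N t) = -6 * q ∧
    (∑ t : F, ((q : ℤ) - N t)) / q = -6 := by
  have hq1 : q % 2 = 1 := Nat.odd_iff.mp hq
  have hF2 : ringChar F ≠ 2 := by
    intro h2
    have := FiniteField.even_card_of_char_two h2
    rw [hcard] at this; omega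
  have h2 : (2 : F) ≠ 0 := Ring.two_ne_zero hF2
  have h4 : (4 : F) ≠ 0 := by
    have : (4 : F) = 2 * 2 := by norm_num
    rw [this]; exact mul_ne_zero h2 h2
  -- Step 1: N t in terms of character sums
  have hNt : ∀ t : F, (N t : ℤ) = (q : ℤ) + ∑ x : F, (quadraticChar F (f x t) : ℤ) := by
    intro t
    have e1 : N t = ∑ x : F, Fintype.card {y : F // y ^ 2 = f x t} := by
      rw [hN t, Nat.card_eq_fintype_card,
        Fintype.card_congr (Equiv.subtypeProdEquivSigmaSubtype
          (fun (x y : F) => y ^ 2 = f x t)), Fintype.card_sigma]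
    have e2 : ∀ x : F, (Fintype.card {y : F // y ^ 2 = f x t} : ℤ)
        = quadraticChar F (f x t) + 1 := by
      intro x
      have hcs := quadraticChar_card_sqrts hF2 (f x t)
      rw [← hcs, Fintype.card_subtype]
      norm_cast
      rw [Set.toFinset_setOf]
    rw [e1]
    push_cast
    rw [Finset.sum_congr rfl (fun x _ => e2 x), Finset.sum_add_distrib]
    simp [hcard, add_comm]
  -- Step 2: key fiberwise computation
  set χ : F → ℤ := fun x => (quadraticChar F x : ℤ) with hχ
  have hS : ∀ x : F, (∑ t : F, χ (f x t)) + χ x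
      = if x ∈ Finset.image ρ Finset.univ then (q : ℤ) * χ x else 0 := by
    intro x
    by_cases hx : x = 0
    · subst hx
      have hnot : (0 : F) ∉ Finset.image ρ Finset.univ := by
        simp only [Finset.mem_image, Finset.mem_univ, true_and]
        rintro ⟨i, hi⟩
        exact (hρ i).1 hi
      rw [if_neg hnot]
      have hf0 : ∀ t : F, f 0 t = 2 * c * t - D := by
        intro t
        rw [hf, hg, hh]; ring
      have hsum0 : ∑ t : F, χ (f 0 t) = 0 := by
        have hbij : Function.Bijective (fun t : F => 2 * c * t - D) := by
          constructor
          · intro u v huv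
            have h2c : 2 * c ≠ 0 := mul_ne_zero h2 hc
            simp only at huv
            have : 2 * c * u = 2 * c * v := by linear_combination huv
            exact mul_left_cancel₀ h2c this
          · intro v
            exact ⟨(v + D) / (2 * c), by field_simp; ring⟩
        rw [Finset.sum_congr rfl (fun t _ => by rw [hf0 t])]
        rw [Fintype.sum_bijective _ hbij _ χ (fun t => rfl)]
        exact_mod_cast congrArg (Int.cast) (quadraticChar_sum_zero hF2)
      rw [hsum0]
      simp [hχ]
    · -- x ≠ 0
      have hx3 : x ^ 3 ≠ 0 := pow_ne_zero 3 hx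
      have hfx : ∀ t : F, f x t = x ^ 3 * t ^ 2 + (2 * g x) * t + (- h x) := by
        intro t; rw [hf]; ring
      have hdisc : (2 * g x) ^ 2 - 4 * x ^ 3 * (- h x) = 4 * (A * ∏ i, (x - ρ i)) := by
        rw [← hDT x]; ring
      have hsum : ∑ t : F, χ (f x t)
          = if (2 * g x) ^ 2 - 4 * x ^ 3 * (- h x) = 0
            then ((Fintype.card F : ℤ) - 1) * quadraticChar F (x ^ 3)
            else - quadraticChar F (x ^ 3) := by
        rw [Finset.sum_congr rfl (fun t _ => by rw [hfx t])]
        exact sum_quadChar_quadratic hF2 (x ^ 3) (2 * g x) (- h x) hx3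
      have hx3χ : (quadraticChar F (x ^ 3) : ℤ) = χ x := by
        have : x ^ 3 = x ^ 2 * x := by ring
        rw [this, map_mul, quadraticChar_sq_one' hx, one_mul]
      have hmem : (2 * g x) ^ 2 - 4 * x ^ 3 * (- h x) = 0
          ↔ x ∈ Finset.image ρ Finset.univ := by
        rw [hdisc]
        rw [mul_eq_zero, mul_eq_zero]
        simp only [h4, hA, false_or]
        rw [Finset.prod_eq_zero_iff]
        constructor
        · rintro ⟨i, _, hi⟩
          exact Finset.mem_image.mpr ⟨i, Finset.mem_univ i, (sub_eq_zero.mp hi).symm⟩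
        · intro hxm
          obtain ⟨i, _, hi⟩ := Finset.mem_image.mp hxm
          exact ⟨i, Finset.mem_univ i, by rw [hi, sub_self]⟩
      by_cases hcase : x ∈ Finset.image ρ Finset.univ
      · rw [if_pos hcase, hsum, if_pos (hmem.mpr hcase), hx3χ, hcard]
        ring
      · rw [if_neg hcase, hsum, if_neg (fun hcc => hcase (hmem.mp hcc)), hx3χ]
        ring
  -- Step 3: assemble
  have hsumχ : ∑ x : F, χ x = 0 := by
    exact_mod_cast congrArg (Int.cast) (quadraticChar_sum_zero hF2)
  have hmain : ∑ t : F, ((q : ℤ) - N t) = - ∑ x : F, ∑ t : F, χ (f x t) := by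
    calc ∑ t : F, ((q : ℤ) - N t)
        = ∑ t : F, (- ∑ x : F, χ (f x t)) :=
          Finset.sum_congr rfl fun t _ => by rw [hNt t]; ring
      _ = - ∑ t : F, ∑ x : F, χ (f x t) := by rw [Finset.sum_neg_distrib]
      _ = - ∑ x : F, ∑ t : F, χ (f x t) := by rw [Finset.sum_comm]
  have himage : ∑ x : F, ((∑ t : F, χ (f x t)) + χ x) = 6 * q := by
    rw [Finset.sum_congr rfl (fun x _ => hS x)]
    rw [Finset.sum_ite_mem, Finset.univ_inter, Finset.sum_image (fun i _ j _ hij => hinj hij)]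
    have : ∀ i : Fin 6, χ (ρ i) = 1 := by
      intro i
      exact_mod_cast congrArg (Int.cast)
        ((quadraticChar_one_iff_isSquare (hρ i).1).mpr (hρ i).2)
    rw [Finset.sum_congr rfl (fun i _ => by rw [this i, mul_one])]
    simp [Finset.sum_const]
  have hfinal : ∑ t : F, ((q : ℤ) - N t) = -6 * q := by
    rw [hmain]
    have := himage
    rw [Finset.sum_add_distrib, hsumχ, add_zero] at this
    rw [this]; ring
  refine ⟨hfinal, ?_⟩
  rw [hfinal]
  have hq0 : (q : ℤ) ≠ 0 := by
    intro hh0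
    have : q = 0 := by exact_mod_cast hh0
    omega
  rw [Int.mul_ediv_cancel _ hq0]
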